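/- arXiv:2210.00584 — 7 statements merged into one kernel-verified Lean document; each statement's English description precedes it below -/
import Mathlib

section
/- Let C be a finite set of n clients, let 1 ≤ k ≤ n, let f : Finset Client → Label be a base FL algorithm, let y be a label, and let a, b be real numbers such that p_j(C, f) ≤ b for every label j ≠ y, b ≤ a, and a ≤ p_y(C, f). Let m be a natural number with m ≤ n − k satisfying ⌈a·C(n,k)⌉/C(n,k) − ⌊b·C(n,k)⌋/C(n,k) > 2 − 2·C(n−m,k)/C(n,k). Then for every finite set C' of clients with |C'| = n and |C' \ C| ≤ m, and for every label j ≠ y, one has N_j(C', f) < N_y(C', f); i.e., the majority vote over the k-element subsets of C' uniquely selects the label y. -/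
open Finset

/-- Label count: number of `k`-element subsets `T` of `S` with `f T = j`. -/
def labelCount {Client Label : Type} [DecidableEq Client] [DecidableEq Label]
    (k : ℕ) (f : Finset Client → Label) (S : Finset Client) (j : Label) : ℕ :=
  ((S.powersetCard k).filter (fun T => f T = j)).card

/-- Label probability: `N_j(S, f) / C(|S|, k)` as a real number. -/
noncomputable def labelProb {Client Label : Type} [DecidableEq Client] [DecidableEq Label]
    (k : ℕ) (f : Finset Client → Label) (S : Finset Client) (j : Label) : ℝ :=
  (labelCount k f S j : ℝ) / (Nat.choose S.card k : ℝ)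

lemma labelCount_mono {Client Label : Type} [DecidableEq Client] [DecidableEq Label]
    (k : ℕ) (f : Finset Client → Label) {I S : Finset Client} (h : I ⊆ S) (j : Label) :
    labelCount k f I j ≤ labelCount k f S j :=
  card_le_card (filter_subset_filter _ (powersetCard_mono h))

lemma labelCount_le_add {Client Label : Type} [DecidableEq Client] [DecidableEq Label]
    (k : ℕ) (f : Finset Client → Label) {I S : Finset Client} (h : I ⊆ S) (j : Label) :
    labelCount k f S j ≤ labelCount k f I j + (S.card.choose k - I.card.choose k) := by
  have hsub : (S.powersetCard k).filter (fun T => f T = j) ⊆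
      ((I.powersetCard k).filter (fun T => f T = j)) ∪ (S.powersetCard k \ I.powersetCard k) := by
    intro T hT
    simp only [mem_filter, mem_union, mem_sdiff] at *
    by_cases hTI : T ∈ I.powersetCard k
    · exact Or.inl ⟨hTI, hT.2⟩
    · exact Or.inr ⟨hT.1, hTI⟩
  calc labelCount k f S j ≤ _ := card_le_card hsub
    _ ≤ _ + _ := card_union_le _ _
    _ = labelCount k f I j + (S.card.choose k - I.card.choose k) := by
        rw [card_sdiff_of_subset (powersetCard_mono h), card_powersetCard, card_powersetCard]
        rfl

theorem flcertP_certified_security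
    {Client Label : Type} [DecidableEq Client] [DecidableEq Label]
    (n k : ℕ) (hk1 : 1 ≤ k) (hkn : k ≤ n)
    (C : Finset Client) (hC : C.card = n)
    (f : Finset Client → Label) (y : Label) (a b : ℝ)
    (hb : ∀ j : Label, j ≠ y → labelProb k f C j ≤ b)
    (hba : b ≤ a)
    (ha : a ≤ labelProb k f C y)
    (m : ℕ) (hm : m ≤ n - k)
    (hcert : (⌈a * (Nat.choose n k : ℝ)⌉ : ℝ) / (Nat.choose n k : ℝ)
           - (⌊b * (Nat.choose n k : ℝ)⌋ : ℝ) / (Nat.choose n k : ℝ)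
           > 2 - 2 * (Nat.choose (n - m) k : ℝ) / (Nat.choose n k : ℝ)) :
    ∀ C' : Finset Client, C'.card = n → (C' \ C).card ≤ m →
      ∀ j : Label, j ≠ y → labelCount k f C' j < labelCount k f C' y := by
  intro C' hC' hdiff j hj
  have hNpos : 0 < n.choose k := Nat.choose_pos hkn
  have hNR : (0 : ℝ) < (n.choose k : ℝ) := by exact_mod_cast hNpos
  set I := C' ∩ C with hI
  have hIC : I ⊆ C := inter_subset_right
  have hIC' : I ⊆ C' := inter_subset_left
  have hIcard : n - m ≤ I.card := by
    have h1 : (C' \ C).card + (C' ∩ C).card = C'.card := card_sdiff_add_card_inter C' C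
    rw [hI]
    omega
  have hIn : I.card ≤ n := by
    have := card_le_card hIC'; omega
  have hW : (n - m).choose k ≤ I.card.choose k := Nat.choose_le_choose k hIcard
  have hWn : I.card.choose k ≤ n.choose k := Nat.choose_le_choose k hIn
  -- key counting bounds in ℤ
  have h1 : (labelCount k f C' j : ℤ) ≤ (labelCount k f C j : ℤ)
      + ((n.choose k : ℤ) - (I.card.choose k : ℤ)) := by
    have ha1 := labelCount_le_add k f hIC' j
    have ha2 := labelCount_mono k f hIC j
    rw [hC'] at ha1
    have : labelCount k f C' j ≤ labelCount k f C j + (n.choose k - I.card.choose k) := by omega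
    have hsub := hWn
    push_cast [Nat.cast_sub hWn] at this ⊢
    omega
  have h2 : (labelCount k f C y : ℤ) ≤ (labelCount k f C' y : ℤ)
      + ((n.choose k : ℤ) - (I.card.choose k : ℤ)) := by
    have ha1 := labelCount_le_add k f hIC y
    have ha2 := labelCount_mono k f hIC' y
    rw [hC] at ha1
    have : labelCount k f C y ≤ labelCount k f C' y + (n.choose k - I.card.choose k) := by omega
    push_cast [Nat.cast_sub hWn] at this ⊢
    omega
  -- ceil/floor bounds
  have hceil : ⌈a * (n.choose k : ℝ)⌉ ≤ (labelCount k f C y : ℤ) := by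
    rw [Int.ceil_le]
    have : a * (n.choose k : ℝ) ≤ labelCount k f C y := by
      have := ha
      rw [labelProb, hC] at this
      rw [le_div_iff₀ hNR] at this
      exact this
    exact_mod_cast this
  have hfloor : (labelCount k f C j : ℤ) ≤ ⌊b * (n.choose k : ℝ)⌋ := by
    rw [Int.le_floor]
    have := hb j hj
    rw [labelProb, hC, div_le_iff₀ hNR] at this
    exact_mod_cast this
  -- certificate in ℤ
  have hmainR : (⌈a * (n.choose k : ℝ)⌉ : ℝ) - (⌊b * (n.choose k : ℝ)⌋ : ℝ)
      > 2 * (n.choose k : ℝ) - 2 * ((n - m).choose k : ℝ) := by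
    have h := mul_lt_mul_of_pos_right hcert hNR
    have e1 : ((⌈a * (n.choose k : ℝ)⌉ : ℝ) / (n.choose k : ℝ)
        - (⌊b * (n.choose k : ℝ)⌋ : ℝ) / (n.choose k : ℝ)) * (n.choose k : ℝ)
        = (⌈a * (n.choose k : ℝ)⌉ : ℝ) - (⌊b * (n.choose k : ℝ)⌋ : ℝ) := by
      field_simp
    have e2 : (2 - 2 * ((n - m).choose k : ℝ) / (n.choose k : ℝ)) * (n.choose k : ℝ)
        = 2 * (n.choose k : ℝ) - 2 * ((n - m).choose k : ℝ) := by
      field_simp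
    rw [e1, e2] at h
    exact h
  have hmain : ⌈a * (n.choose k : ℝ)⌉ - ⌊b * (n.choose k : ℝ)⌋
      > 2 * (n.choose k : ℤ) - 2 * ((n - m).choose k : ℤ) := by exact_mod_cast hmainR
  have hWZ : ((n - m).choose k : ℤ) ≤ (I.card.choose k : ℤ) := by exact_mod_cast hW
  have : (labelCount k f C' j : ℤ) < (labelCount k f C' y : ℤ) := by linarith
  exact_mod_cast this
end

section
/- (Tightness of the certified security level.) Let C be a finite set of n clients, let 1 ≤ k ≤ n, and let y, z be distinct labels such that there exists a third label distinct from both. Let a, b be real numbers with 0 ≤ b ≤ a and a + b ≤ 1. Let C' be a finite set of clients with |C'| = n and m := |C' \ C| ≥ 1, and suppose the certification condition fails at m, i.e., ⌈a·C(n,k)⌉/C(n,k) − ⌊b·C(n,k)⌋/C(n,k) ≤ 2 − 2·C(n−m,k)/C(n,k) (where C(n−m,k) = 0 whenever n − m < k). Then there exists a function f : Finset Client → Label such that p_y(C, f) ≥ a, p_z(C, f) ≤ b, and N_z(C', f) ≥ N_y(C', f); i.e., the majority vote over the k-element subsets of C' does not uniquely select y. -/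
open Finset

theorem flcertP_tightness
    {Client Label : Type} [DecidableEq Client] [DecidableEq Label]
    (n k : ℕ) (hk1 : 1 ≤ k) (hkn : k ≤ n)
    (C : Finset Client) (hC : C.card = n)
    (y z : Label) (hyz : y ≠ z) (hthird : ∃ w : Label, w ≠ y ∧ w ≠ z)
    (a b : ℝ) (hb0 : 0 ≤ b) (hba : b ≤ a) (hab1 : a + b ≤ 1)
    (C' : Finset Client) (hC' : C'.card = n) (hm1 : 1 ≤ (C' \ C).card)
    (hfail : (⌈a * (Nat.choose n k : ℝ)⌉ : ℝ) / (Nat.choose n k : ℝ)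
           - (⌊b * (Nat.choose n k : ℝ)⌋ : ℝ) / (Nat.choose n k : ℝ)
           ≤ 2 - 2 * (Nat.choose (n - (C' \ C).card) k : ℝ) / (Nat.choose n k : ℝ)) :
    ∃ f : Finset Client → Label,
      a ≤ labelProb k f C y ∧
      labelProb k f C z ≤ b ∧
      labelCount k f C' y ≤ labelCount k f C' z := by
  classical
  obtain ⟨w, hwy, hwz⟩ := hthird
  set m := (C' \ C).card with hmdef
  set N := Nat.choose n k with hNdef
  set M := Nat.choose (n - m) k with hMdef
  have hN0 : 0 < N := Nat.choose_pos hkn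
  have hNR : (0:ℝ) < (N:ℝ) := by exact_mod_cast hN0
  have hMN : M ≤ N := Nat.choose_le_choose k (Nat.sub_le n m)
  have ha0 : 0 ≤ a := le_trans hb0 hba
  have haN0 : 0 ≤ a * (N:ℝ) := by positivity
  have hbN0 : 0 ≤ b * (N:ℝ) := by positivity
  set A := (⌈a * (N:ℝ)⌉).toNat with hAdef
  set B := (⌊b * (N:ℝ)⌋).toNat with hBdef
  have hAZ : (A : ℤ) = ⌈a * (N:ℝ)⌉ := Int.toNat_of_nonneg (Int.ceil_nonneg haN0)
  have hBZ : (B : ℤ) = ⌊b * (N:ℝ)⌋ := Int.toNat_of_nonneg (Int.floor_nonneg.mpr hbN0)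
  have hAr : (A : ℝ) = ((⌈a * (N:ℝ)⌉ : ℤ) : ℝ) := by exact_mod_cast congrArg (fun x : ℤ => (x:ℝ)) hAZ
  have hBr : (B : ℝ) = ((⌊b * (N:ℝ)⌋ : ℤ) : ℝ) := by exact_mod_cast congrArg (fun x : ℤ => (x:ℝ)) hBZ
  have hAge : a * (N:ℝ) ≤ A := by rw [hAr]; exact Int.le_ceil _
  have hBle : (B:ℝ) ≤ b * (N:ℝ) := by rw [hBr]; exact Int.floor_le _
  -- A + B ≤ N
  have hABZ : (A:ℤ) + B ≤ N := by
    rw [hAZ, hBZ]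
    have h1 : ⌈a * (N:ℝ)⌉ ≤ (N:ℤ) - ⌊b*(N:ℝ)⌋ := by
      rw [Int.ceil_le]
      push_cast
      have h2 := Int.floor_le (b*(N:ℝ))
      nlinarith [hNR.le]
    omega
  have hABN : A + B ≤ N := by exact_mod_cast hABZ
  have hAN : A ≤ N := by omega
  -- key inequality
  have hkey : A + 2 * M ≤ B + 2 * N := by
    rw [← hAr, ← hBr] at hfail
    have hreal : (A:ℝ) + 2*M ≤ (B:ℝ) + 2*N := by
      have h1 : ((A:ℝ)/N - (B:ℝ)/N) * N ≤ (2 - 2*(M:ℝ)/N) * N := by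
        exact mul_le_mul_of_nonneg_right hfail hNR.le
      field_simp at h1
      nlinarith
    exact_mod_cast hreal
  -- set cardinalities
  set P := C.powersetCard k with hPdef
  set P' := C'.powersetCard k with hP'def
  set I := (C' ∩ C).powersetCard k with hIdef
  have hPcard : P.card = N := by rw [hPdef, Finset.card_powersetCard, hC]
  have hP'card : P'.card = N := by rw [hP'def, Finset.card_powersetCard, hC']
  have hIcard : I.card = M := by
    rw [hIdef, Finset.card_powersetCard]
    have h := Finset.card_sdiff_add_card_inter C' C
    rw [← hmdef] at h
    have : (C' ∩ C).card = n - m := by omega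
    rw [this]
  have hIP : I ⊆ P := Finset.powersetCard_mono Finset.inter_subset_right
  have hIP' : I ⊆ P' := Finset.powersetCard_mono Finset.inter_subset_left
  have hIPP' : P' ∩ P = I := by
    ext T
    simp only [Finset.mem_inter, hPdef, hP'def, hIdef, Finset.mem_powersetCard]
    constructor
    · rintro ⟨⟨h1, hc⟩, ⟨h2, _⟩⟩; exact ⟨Finset.subset_inter h1 h2, hc⟩
    · rintro ⟨h, hc⟩
      exact ⟨⟨h.trans Finset.inter_subset_left, hc⟩, ⟨h.trans Finset.inter_subset_right, hc⟩⟩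
  -- construction
  obtain ⟨Y1, hY1sub, hY1card⟩ := Finset.exists_subset_card_eq
    (show min A (N - M) ≤ (P \ I).card by
      rw [Finset.card_sdiff_of_subset hIP, hPcard, hIcard]; exact min_le_right _ _)
  obtain ⟨Y2, hY2sub, hY2card⟩ := Finset.exists_subset_card_eq
    (show A - min A (N - M) ≤ I.card by rw [hIcard]; omega)
  obtain ⟨Z, hZsub, hZcard⟩ := Finset.exists_subset_card_eq
    (show min B (M - (A - min A (N - M))) ≤ (I \ Y2).card by
      rw [Finset.card_sdiff_of_subset hY2sub, hIcard, hY2card]; exact min_le_right _ _)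
  have hZI : Z ⊆ I := hZsub.trans Finset.sdiff_subset
  have hY1P : Y1 ⊆ P := hY1sub.trans Finset.sdiff_subset
  have hY2P : Y2 ⊆ P := hY2sub.trans hIP
  have hZP : Z ⊆ P := hZI.trans hIP
  have hd12 : Disjoint Y1 Y2 :=
    Finset.disjoint_left.mpr fun T h1 h2 => (Finset.mem_sdiff.mp (hY1sub h1)).2 (hY2sub h2)
  have hdZ2 : Disjoint Z Y2 :=
    Finset.disjoint_left.mpr fun T h1 h2 => (Finset.mem_sdiff.mp (hZsub h1)).2 h2
  have hdZ1 : Disjoint Z Y1 :=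
    Finset.disjoint_left.mpr fun T h1 h2 => (Finset.mem_sdiff.mp (hY1sub h2)).2 (hZI h1)
  set f : Finset Client → Label :=
    fun T => if T ∈ Y1 ∪ Y2 then y else if T ∈ Z ∪ (P' \ P) then z else w with hfdef
  have hfy : ∀ T, f T = y ↔ T ∈ Y1 ∪ Y2 := by
    intro T
    simp only [hfdef]
    by_cases h : T ∈ Y1 ∪ Y2
    · rw [if_pos h]; exact ⟨fun _ => h, fun _ => rfl⟩
    · rw [if_neg h]
      constructor
      · intro he
        exfalso
        by_cases h2 : T ∈ Z ∪ (P' \ P)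
        · rw [if_pos h2] at he; exact hyz he.symm
        · rw [if_neg h2] at he; exact hwy he
      · intro he; exact absurd he h
  have hfz : ∀ T, f T = z ↔ (T ∉ Y1 ∪ Y2 ∧ T ∈ Z ∪ (P' \ P)) := by
    intro T
    simp only [hfdef]
    by_cases h : T ∈ Y1 ∪ Y2
    · rw [if_pos h]
      exact ⟨fun he => absurd he hyz, fun he => absurd h he.1⟩
    · rw [if_neg h]
      by_cases h2 : T ∈ Z ∪ (P' \ P)
      · rw [if_pos h2]; exact ⟨fun _ => ⟨h, h2⟩, fun _ => rfl⟩
      · rw [if_neg h2]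
        exact ⟨fun he => absurd he hwz, fun he => absurd he.2 h2⟩
  -- counts on C
  have e1 : labelCount k f C y = A := by
    unfold labelCount
    have : (C.powersetCard k).filter (fun T => f T = y) = Y1 ∪ Y2 := by
      ext T
      simp only [Finset.mem_filter, hfy, ← hPdef]
      constructor
      · exact fun h => h.2
      · intro h
        refine ⟨?_, h⟩
        rcases Finset.mem_union.mp h with h' | h'
        · exact hY1P h'
        · exact hY2P h'
    rw [this, Finset.card_union_of_disjoint hd12, hY1card, hY2card]
    omega
  have e2 : labelCount k f C z = min B (M - (A - min A (N - M))) := by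
    unfold labelCount
    have : (C.powersetCard k).filter (fun T => f T = z) = Z := by
      ext T
      simp only [Finset.mem_filter, hfz, ← hPdef]
      constructor
      · rintro ⟨hTP, hnY, hZ⟩
        rcases Finset.mem_union.mp hZ with h' | h'
        · exact h'
        · exact absurd hTP (Finset.mem_sdiff.mp h').2
      · intro hTZ
        refine ⟨hZP hTZ, ?_, Finset.mem_union_left _ hTZ⟩
        intro hY
        rcases Finset.mem_union.mp hY with h' | h'
        · exact Finset.disjoint_left.mp hdZ1 hTZ h'
        · exact Finset.disjoint_left.mp hdZ2 hTZ h'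
    rw [this, hZcard]
  -- counts on C'
  have e3 : labelCount k f C' y = A - min A (N - M) := by
    unfold labelCount
    have : (C'.powersetCard k).filter (fun T => f T = y) = Y2 := by
      ext T
      simp only [Finset.mem_filter, hfy, ← hP'def]
      constructor
      · rintro ⟨hTP', hY⟩
        rcases Finset.mem_union.mp hY with h' | h'
        · exfalso
          have : T ∈ I := by rw [← hIPP']; exact Finset.mem_inter.mpr ⟨hTP', hY1P h'⟩
          exact (Finset.mem_sdiff.mp (hY1sub h')).2 this
        · exact h'
      · intro h
        exact ⟨hIP' (hY2sub h), Finset.mem_union_right _ h⟩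
    rw [this, hY2card]
  have e4 : labelCount k f C' z = min B (M - (A - min A (N - M))) + (N - M) := by
    unfold labelCount
    have heq : (C'.powersetCard k).filter (fun T => f T = z) = Z ∪ (P' \ P) := by
      ext T
      simp only [Finset.mem_filter, hfz, ← hP'def]
      constructor
      · exact fun h => h.2.2
      · intro h
        have hTP' : T ∈ P' := by
          rcases Finset.mem_union.mp h with h' | h'
          · exact hIP' (hZI h')
          · exact (Finset.mem_sdiff.mp h').1
        refine ⟨hTP', ?_, h⟩
        intro hY
        have hTP : T ∈ P := by
          rcases Finset.mem_union.mp hY with h' | h'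
          · exact hY1P h'
          · exact hY2P h'
        have hTZ : T ∈ Z := by
          rcases Finset.mem_union.mp h with h' | h'
          · exact h'
          · exact absurd hTP (Finset.mem_sdiff.mp h').2
        rcases Finset.mem_union.mp hY with h' | h'
        · exact Finset.disjoint_left.mp hdZ1 hTZ h'
        · exact Finset.disjoint_left.mp hdZ2 hTZ h'
    have hdisj : Disjoint Z (P' \ P) :=
      Finset.disjoint_left.mpr fun T h1 h2 => (Finset.mem_sdiff.mp h2).2 (hZP h1)
    have hcard2 : (P' \ P).card = N - M := by
      have h := Finset.card_sdiff_add_card_inter P' P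
      rw [hIPP', hIcard, hP'card] at h
      omega
    rw [heq, Finset.card_union_of_disjoint hdisj, hZcard, hcard2]
  refine ⟨f, ?_, ?_, ?_⟩
  · unfold labelProb
    rw [e1, hC, ← hNdef, le_div_iff₀ hNR]
    exact hAge
  · unfold labelProb
    rw [e2, hC, ← hNdef, div_le_iff₀ hNR]
    calc ((min B (M - (A - min A (N - M))) : ℕ) : ℝ) ≤ (B:ℝ) := Nat.cast_le.mpr (min_le_left _ _)
      _ ≤ b * (N:ℝ) := hBle
  · rw [e3, e4]
    omega
end

section
/- (Tightness, Case 1: m > n − k.) Let C and C' be finite sets of clients with |C| = |C'| = n, let k satisfy k ≤ n and n − |C' \ C| < k (so that no k-element subset of C ∩ C' exists), let y, z be distinct labels such that there exists a third label distinct from both, and let a, b be real numbers with 0 ≤ a, 0 ≤ b, and a + b ≤ 1. Then there exists a function f : Finset Client → Label such that N_y(C, f) = ⌈a·C(n,k)⌉, N_z(C, f) = ⌊b·C(n,k)⌋, f T = z for every k-element subset T of C' (hence N_z(C', f) = C(n,k) and N_y(C', f) = 0). -/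
open Finset

theorem flcertP_tightness_case1
    {Client Label : Type} [DecidableEq Client] [DecidableEq Label]
    (n k : ℕ) (hkn : k ≤ n)
    (C C' : Finset Client) (hC : C.card = n) (hC' : C'.card = n)
    (hbig : n - (C' \ C).card < k)
    (y z : Label) (hyz : y ≠ z) (hthird : ∃ w : Label, w ≠ y ∧ w ≠ z)
    (a b : ℝ) (ha0 : 0 ≤ a) (hb0 : 0 ≤ b) (hab1 : a + b ≤ 1) :
    ∃ f : Finset Client → Label,
      (labelCount k f C y : ℤ) = ⌈a * (Nat.choose n k : ℝ)⌉ ∧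
      (labelCount k f C z : ℤ) = ⌊b * (Nat.choose n k : ℝ)⌋ ∧
      (∀ T ∈ C'.powersetCard k, f T = z) ∧
      labelCount k f C' z = Nat.choose n k ∧
      labelCount k f C' y = 0 := by
  obtain ⟨w, hwy, hwz⟩ := hthird
  set N := Nat.choose n k with hN
  have hN0 : (0:ℝ) ≤ (N:ℝ) := by positivity
  have hPcard : (C.powersetCard k).card = N := by
    rw [Finset.card_powersetCard, hC]
  have hP'card : (C'.powersetCard k).card = N := by
    rw [Finset.card_powersetCard, hC']
  have hdisj : ∀ T ∈ C.powersetCard k, T ∉ C'.powersetCard k := by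
    intro T hT hT'
    rw [Finset.mem_powersetCard] at hT hT'
    have hsub : T ⊆ C' ∩ C := Finset.subset_inter hT'.1 hT.1
    have h1 : T.card ≤ (C' ∩ C).card := Finset.card_le_card hsub
    have h2 : (C' ∩ C).card + (C' \ C).card = n := by
      rw [Finset.card_inter_add_card_sdiff, hC']
    omega
  have hceil0 : 0 ≤ ⌈a * (N:ℝ)⌉ := Int.ceil_nonneg (by positivity)
  have hfloor0 : 0 ≤ ⌊b * (N:ℝ)⌋ := Int.floor_nonneg.mpr (by positivity)
  have hsum : ⌈a * (N:ℝ)⌉ + ⌊b * (N:ℝ)⌋ ≤ (N : ℤ) := by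
    have h1 : ⌈a * (N:ℝ)⌉ ≤ (N : ℤ) - ⌊b * (N:ℝ)⌋ := by
      rw [Int.ceil_le]
      push_cast
      nlinarith [Int.floor_le (b * (N:ℝ))]
    omega
  set p := (⌈a * (N:ℝ)⌉).toNat with hpd
  set q := (⌊b * (N:ℝ)⌋).toNat with hqd
  have hp : (p : ℤ) = ⌈a * (N:ℝ)⌉ := Int.toNat_of_nonneg hceil0
  have hq : (q : ℤ) = ⌊b * (N:ℝ)⌋ := Int.toNat_of_nonneg hfloor0
  have hpqN : p + q ≤ N := by
    have : (p : ℤ) + (q : ℤ) ≤ (N : ℤ) := by rw [hp, hq]; exact hsum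
    exact_mod_cast this
  obtain ⟨A, hAsub, hAcard⟩ := Finset.exists_subset_card_eq (s := C.powersetCard k) (n := p)
    (by omega : p ≤ (C.powersetCard k).card)
  obtain ⟨B, hBsub, hBcard⟩ := Finset.exists_subset_card_eq (s := (C.powersetCard k) \ A) (n := q)
    (by
      have := Finset.card_sdiff_of_subset hAsub
      rw [Finset.card_sdiff_of_subset hAsub]
      omega)
  have hBsub' : B ⊆ C.powersetCard k := hBsub.trans (Finset.sdiff_subset)
  have hAB : ∀ T ∈ B, T ∉ A := by
    intro T hT
    exact (Finset.mem_sdiff.mp (hBsub hT)).2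
  refine ⟨fun T => if T ∈ C'.powersetCard k then z else if T ∈ A then y
    else if T ∈ B then z else w, ?_, ?_, ?_, ?_, ?_⟩
  · have hfilter : (C.powersetCard k).filter
        (fun T => (if T ∈ C'.powersetCard k then z else if T ∈ A then y
          else if T ∈ B then z else w) = y) = A := by
      ext T
      simp only [Finset.mem_filter]
      constructor
      · rintro ⟨hT, hfy⟩
        have h1 : T ∉ C'.powersetCard k := hdisj T hT
        rw [if_neg h1] at hfy
        by_contra hTA
        rw [if_neg hTA] at hfy
        split_ifs at hfy
        · exact hyz hfy.symm
        · exact hwy hfy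
      · intro hTA
        refine ⟨hAsub hTA, ?_⟩
        rw [if_neg (hdisj T (hAsub hTA)), if_pos hTA]
    rw [labelCount, hfilter, hAcard, hp]
  · have hfilter : (C.powersetCard k).filter
        (fun T => (if T ∈ C'.powersetCard k then z else if T ∈ A then y
          else if T ∈ B then z else w) = z) = B := by
      ext T
      simp only [Finset.mem_filter]
      constructor
      · rintro ⟨hT, hfz⟩
        have h1 : T ∉ C'.powersetCard k := hdisj T hT
        rw [if_neg h1] at hfz
        by_contra hTB
        rw [if_neg (fun hTA => hyz (by rwa [if_pos hTA] at hfz)),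
          if_neg hTB] at hfz
        exact hwz hfz
      · intro hTB
        refine ⟨hBsub' hTB, ?_⟩
        rw [if_neg (hdisj T (hBsub' hTB)), if_neg (hAB T hTB), if_pos hTB]
    rw [labelCount, hfilter, hBcard, hq]
  · intro T hT
    simp only [if_pos hT]
  · have hfilter : (C'.powersetCard k).filter
        (fun T => (if T ∈ C'.powersetCard k then z else if T ∈ A then y
          else if T ∈ B then z else w) = z) = C'.powersetCard k := by
      apply Finset.filter_true_of_mem
      intro T hT
      rw [if_pos hT]
    rw [labelCount, hfilter, hP'card]
  · have hfilter : (C'.powersetCard k).filter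
        (fun T => (if T ∈ C'.powersetCard k then z else if T ∈ A then y
          else if T ∈ B then z else w) = y) = ∅ := by
      apply Finset.filter_false_of_mem
      intro T hT
      rw [if_pos hT]
      exact fun h => hyz h.symm
    rw [labelCount, hfilter, Finset.card_empty]
end

section
/- (Tightness, Case 2.) Let C and C' be finite sets of clients with |C| = |C'| = n, put m := |C' \ C| and q := C(n−m, k), and assume 1 ≤ m, 1 ≤ k, and k < n − m. Let y, z be distinct labels such that there exists a third label distinct from both, and let a, b be real numbers with 0 ≤ a, 0 ≤ b, a·C(n,k) ≤ C(n,k) − q, and b·C(n,k) ≤ q. Then there exists a function f : Finset Client → Label such that N_y(C, f) = ⌈a·C(n,k)⌉, N_z(C, f) = ⌊b·C(n,k)⌋, N_y(C', f) = 0, N_z(C', f) = ⌊b·C(n,k)⌋ + C(n,k) − q, and in particular N_z(C', f) > N_y(C', f). -/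
open Finset

theorem flcertP_tightness_case2
    {Client Label : Type} [DecidableEq Client] [DecidableEq Label]
    (n k : ℕ)
    (C C' : Finset Client) (hC : C.card = n) (hC' : C'.card = n)
    (m : ℕ) (hm : m = (C' \ C).card)
    (q : ℕ) (hq : q = Nat.choose (n - m) k)
    (hm1 : 1 ≤ m) (hk1 : 1 ≤ k) (hknm : k < n - m)
    (y z : Label) (hyz : y ≠ z) (hthird : ∃ w : Label, w ≠ y ∧ w ≠ z)
    (a b : ℝ) (ha0 : 0 ≤ a) (hb0 : 0 ≤ b)
    (ha : a * (Nat.choose n k : ℝ) ≤ (Nat.choose n k : ℝ) - (q : ℝ))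
    (hb : b * (Nat.choose n k : ℝ) ≤ (q : ℝ)) :
    ∃ f : Finset Client → Label,
      (labelCount k f C y : ℤ) = ⌈a * (Nat.choose n k : ℝ)⌉ ∧
      (labelCount k f C z : ℤ) = ⌊b * (Nat.choose n k : ℝ)⌋ ∧
      labelCount k f C' y = 0 ∧
      (labelCount k f C' z : ℤ)
        = ⌊b * (Nat.choose n k : ℝ)⌋ + (Nat.choose n k : ℤ) - (q : ℤ) ∧
      labelCount k f C' y < labelCount k f C' z := by
  obtain ⟨w, hwy, hwz⟩ := hthird
  set N := Nat.choose n k with hN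
  -- intersection cardinality
  have hI : (C ∩ C').card = n - m := by
    have h := Finset.card_sdiff_add_card_inter C' C
    rw [hC'] at h
    rw [Finset.inter_comm]
    omega
  -- q < N
  have hqN : q < N := by
    rw [hq, hN]
    have h1 : n - m + 1 ≤ n := by omega
    have h2 : Nat.choose (n - m) k < Nat.choose (n - m + 1) k := by
      obtain ⟨k', rfl⟩ : ∃ k', k = k' + 1 := ⟨k - 1, by omega⟩
      rw [Nat.choose_succ_succ]
      simp only [Nat.succ_eq_add_one]
      have : 0 < Nat.choose (n - m) k' := Nat.choose_pos (by omega)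
      omega
    exact lt_of_lt_of_le h2 (Nat.choose_le_choose _ h1)
  have hqleN : q ≤ N := hqN.le
  set P := C.powersetCard k with hP
  set P' := C'.powersetCard k with hP'
  set Q := (C ∩ C').powersetCard k with hQdef
  have hPcard : P.card = N := by rw [hP, Finset.card_powersetCard, hC]
  have hP'card : P'.card = N := by rw [hP', Finset.card_powersetCard, hC']
  have hQcard : Q.card = q := by rw [hQdef, Finset.card_powersetCard, hI, hq]
  have hQP : Q ⊆ P := Finset.powersetCard_mono Finset.inter_subset_left
  have hQP' : Q ⊆ P' := Finset.powersetCard_mono Finset.inter_subset_right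
  have hPP' : P ∩ P' = Q := by
    ext T
    simp only [Finset.mem_inter, hP, hP', hQdef, Finset.mem_powersetCard,
      Finset.subset_inter_iff]
    tauto
  -- integer quantities
  have haN : (0:ℝ) ≤ a * N := mul_nonneg ha0 (Nat.cast_nonneg _)
  have hbN : (0:ℝ) ≤ b * N := mul_nonneg hb0 (Nat.cast_nonneg _)
  set A := (⌈a * (N:ℝ)⌉).toNat with hA
  set B := (⌊b * (N:ℝ)⌋).toNat with hB
  have hAceil : (A : ℤ) = ⌈a * (N:ℝ)⌉ := Int.toNat_of_nonneg (Int.ceil_nonneg haN)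
  have hBfloor : (B : ℤ) = ⌊b * (N:ℝ)⌋ := Int.toNat_of_nonneg (Int.floor_nonneg.mpr hbN)
  have hAle : A ≤ N - q := by
    have h : (⌈a * (N:ℝ)⌉ : ℤ) ≤ (N:ℤ) - (q:ℤ) := Int.ceil_le.mpr (by push_cast; exact ha)
    omega
  have hBle : B ≤ q := by
    have h : (⌊b * (N:ℝ)⌋ : ℤ) ≤ (q:ℤ) := by
      have := Int.floor_le_floor hb
      rwa [Int.floor_natCast] at this
    omega
  obtain ⟨SB, hSBsub, hSBcard⟩ := Finset.exists_subset_card_eq (show B ≤ Q.card by omega)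
  obtain ⟨SA, hSAsub, hSAcard⟩ := Finset.exists_subset_card_eq
    (show A ≤ (P \ Q).card by rw [Finset.card_sdiff_of_subset hQP, hPcard, hQcard]; exact hAle)
  refine ⟨fun T => if T ∈ SA then y else if T ∈ SB ∨ T ∈ P' \ Q then z else w, ?_, ?_, ?_, ?_, ?_⟩
  · -- N_y(C) = A
    have : (P.filter (fun T => (if T ∈ SA then y else if T ∈ SB ∨ T ∈ P' \ Q then z else w) = y))
        = SA := by
      ext T
      simp only [Finset.mem_filter]
      constructor
      · rintro ⟨hTP, hf⟩
        by_contra h1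
        rw [if_neg h1] at hf
        split_ifs at hf <;> simp_all
      · intro hT
        exact ⟨(Finset.sdiff_subset (hSAsub hT) : T ∈ P), by rw [if_pos hT]⟩
    rw [labelCount, ← hP, this, hSAcard, hAceil]
  · -- N_z(C) = B
    have : (P.filter (fun T => (if T ∈ SA then y else if T ∈ SB ∨ T ∈ P' \ Q then z else w) = z))
        = SB := by
      ext T
      simp only [Finset.mem_filter]
      constructor
      · rintro ⟨hTP, hf⟩
        split_ifs at hf with h1 h2
        · exact absurd hf hyz
        · rcases h2 with h2 | h2
          · exact h2
          · exact absurd (hPP' ▸ Finset.mem_inter.mpr ⟨hTP, (Finset.mem_sdiff.mp h2).1⟩)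
              (Finset.mem_sdiff.mp h2).2
        · exact absurd hf hwz
      · intro hT
        have hTQ : T ∈ Q := hSBsub hT
        have hTA : T ∉ SA := fun h => (Finset.mem_sdiff.mp (hSAsub h)).2 hTQ
        exact ⟨hQP hTQ, by rw [if_neg hTA, if_pos (Or.inl hT)]⟩
    rw [labelCount, ← hP, this, hSBcard, hBfloor]
  · -- N_y(C') = 0
    have : (P'.filter (fun T => (if T ∈ SA then y else if T ∈ SB ∨ T ∈ P' \ Q then z else w) = y))
        = ∅ := by
      ext T
      simp only [Finset.mem_filter, Finset.notMem_empty, iff_false, not_and]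
      intro hTP' hf
      by_cases h1 : T ∈ SA
      · have hTPQ := Finset.mem_sdiff.mp (hSAsub h1)
        exact hTPQ.2 (hPP' ▸ Finset.mem_inter.mpr ⟨hTPQ.1, hTP'⟩)
      · rw [if_neg h1] at hf
        split_ifs at hf <;> simp_all
    rw [labelCount, ← hP', this, Finset.card_empty]
  · -- N_z(C') = B + N - q
    have key : (P'.filter
        (fun T => (if T ∈ SA then y else if T ∈ SB ∨ T ∈ P' \ Q then z else w) = z))
        = SB ∪ (P' \ Q) := by
      ext T
      simp only [Finset.mem_filter, Finset.mem_union]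
      constructor
      · rintro ⟨hTP', hf⟩
        split_ifs at hf with h1 h2
        · exact absurd hf hyz
        · exact h2
        · exact absurd hf hwz
      · intro hT
        have hTP' : T ∈ P' := by
          rcases hT with h | h
          · exact hQP' (hSBsub h)
          · exact (Finset.mem_sdiff.mp h).1
        have hTA : T ∉ SA := by
          intro h
          have hTPQ := Finset.mem_sdiff.mp (hSAsub h)
          exact hTPQ.2 (hPP' ▸ Finset.mem_inter.mpr ⟨hTPQ.1, hTP'⟩)
        exact ⟨hTP', by rw [if_neg hTA, if_pos hT]⟩
    have hdisj : Disjoint SB (P' \ Q) := by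
      refine Finset.disjoint_left.mpr fun T hT h2 => ?_
      exact (Finset.mem_sdiff.mp h2).2 (hSBsub hT)
    have hcard : (P'.filter
        (fun T => (if T ∈ SA then y else if T ∈ SB ∨ T ∈ P' \ Q then z else w) = z)).card
        = B + (N - q) := by
      rw [key, Finset.card_union_of_disjoint hdisj, hSBcard,
        Finset.card_sdiff_of_subset hQP', hP'card, hQcard]
    rw [labelCount, ← hP', hcard]
    push_cast [hBfloor]
    omega
  · -- strict inequality
    have h3 : (labelCount k (fun T => if T ∈ SA then y else if T ∈ SB ∨ T ∈ P' \ Q then z else w)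
        C' z) = B + (N - q) := by
      rw [labelCount, ← hP']
      have key : (P'.filter
          (fun T => (if T ∈ SA then y else if T ∈ SB ∨ T ∈ P' \ Q then z else w) = z))
          = SB ∪ (P' \ Q) := by
        ext T
        simp only [Finset.mem_filter, Finset.mem_union]
        constructor
        · rintro ⟨hTP', hf⟩
          split_ifs at hf with h1 h2
          · exact absurd hf hyz
          · exact h2
          · exact absurd hf hwz
        · intro hT
          have hTP' : T ∈ P' := by
            rcases hT with h | h
            · exact hQP' (hSBsub h)
            · exact (Finset.mem_sdiff.mp h).1
          have hTA : T ∉ SA := by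
            intro h
            have hTPQ := Finset.mem_sdiff.mp (hSAsub h)
            exact hTPQ.2 (hPP' ▸ Finset.mem_inter.mpr ⟨hTPQ.1, hTP'⟩)
          exact ⟨hTP', by rw [if_neg hTA, if_pos hT]⟩
      have hdisj : Disjoint SB (P' \ Q) := by
        refine Finset.disjoint_left.mpr fun T hT h2 => ?_
        exact (Finset.mem_sdiff.mp h2).2 (hSBsub hT)
      rw [key, Finset.card_union_of_disjoint hdisj, hSBcard,
        Finset.card_sdiff_of_subset hQP', hP'card, hQcard]
    have h2 : (labelCount k (fun T => if T ∈ SA then y else if T ∈ SB ∨ T ∈ P' \ Q then z else w)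
        C' y) = 0 := by
      rw [labelCount, ← hP']
      have : (P'.filter
          (fun T => (if T ∈ SA then y else if T ∈ SB ∨ T ∈ P' \ Q then z else w) = y)) = ∅ := by
        ext T
        simp only [Finset.mem_filter, Finset.notMem_empty, iff_false, not_and]
        intro hTP' hf
        by_cases h1 : T ∈ SA
        · have hTPQ := Finset.mem_sdiff.mp (hSAsub h1)
          exact hTPQ.2 (hPP' ▸ Finset.mem_inter.mpr ⟨hTPQ.1, hTP'⟩)
        · rw [if_neg h1] at hf
          split_ifs at hf <;> simp_all
      rw [this, Finset.card_empty]
    rw [h2, h3]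
    omega
end

section
/- (Tightness, Case 3.) Let C and C' be finite sets of clients with |C| = |C'| = n, put m := |C' \ C| and q := C(n−m, k), and assume 1 ≤ m, 1 ≤ k, and k < n − m. Let y, z be distinct labels such that there exists a third label distinct from both, and let a, b be real numbers with 0 ≤ a, a·C(n,k) ≤ C(n,k) − q, q ≤ b·C(n,k), and a + b ≤ 1. Then there exists a function f : Finset Client → Label such that N_y(C, f) = ⌈a·C(n,k)⌉, N_z(C, f) = ⌊b·C(n,k)⌋, f T = z for every k-element subset T of C' (hence N_z(C', f) = C(n,k) and N_y(C', f) = 0). -/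
open Finset

theorem flcertP_tightness_case3
    {Client Label : Type} [DecidableEq Client] [DecidableEq Label]
    (n k : ℕ)
    (C C' : Finset Client) (hC : C.card = n) (hC' : C'.card = n)
    (m : ℕ) (hm : m = (C' \ C).card)
    (q : ℕ) (hq : q = Nat.choose (n - m) k)
    (hm1 : 1 ≤ m) (hk1 : 1 ≤ k) (hknm : k < n - m)
    (y z : Label) (hyz : y ≠ z) (hthird : ∃ w : Label, w ≠ y ∧ w ≠ z)
    (a b : ℝ) (ha0 : 0 ≤ a)
    (ha : a * (Nat.choose n k : ℝ) ≤ (Nat.choose n k : ℝ) - (q : ℝ))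
    (hb : (q : ℝ) ≤ b * (Nat.choose n k : ℝ))
    (hab1 : a + b ≤ 1) :
    ∃ f : Finset Client → Label,
      (labelCount k f C y : ℤ) = ⌈a * (Nat.choose n k : ℝ)⌉ ∧
      (labelCount k f C z : ℤ) = ⌊b * (Nat.choose n k : ℝ)⌋ ∧
      (∀ T ∈ C'.powersetCard k, f T = z) ∧
      labelCount k f C' z = Nat.choose n k ∧
      labelCount k f C' y = 0 := by
  obtain ⟨w, hwy, hwz⟩ := hthird
  set N : ℕ := Nat.choose n k with hN
  have hqN : q ≤ N := by
    rw [hq, hN]; exact Nat.choose_le_choose k (Nat.sub_le n m)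
  have hA0 : (0:ℤ) ≤ ⌈a * (N:ℝ)⌉ := Int.ceil_nonneg (by positivity)
  set A : ℕ := (⌈a * (N:ℝ)⌉).toNat with hAdef
  have hAcast : (A:ℤ) = ⌈a * (N:ℝ)⌉ := Int.toNat_of_nonneg hA0
  have hB0 : (q:ℤ) ≤ ⌊b * (N:ℝ)⌋ := Int.le_floor.mpr (by push_cast; exact hb)
  set B : ℕ := (⌊b * (N:ℝ)⌋).toNat with hBdef
  have hBcast : (B:ℤ) = ⌊b * (N:ℝ)⌋ :=
    Int.toNat_of_nonneg (le_trans (Int.ofNat_nonneg q) hB0)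
  have hqB : q ≤ B := by
    have : (q:ℤ) ≤ (B:ℤ) := hBcast ▸ hB0
    exact_mod_cast this
  have hAle : A ≤ N - q := by
    have h1 : (A:ℤ) ≤ (N:ℤ) - (q:ℤ) := by
      rw [hAcast]
      apply Int.ceil_le.mpr
      push_cast
      exact ha
    omega
  have hABN : A + B ≤ N := by
    have h1 : (A:ℤ) + (B:ℤ) ≤ (N:ℤ) := by
      rw [hAcast, hBcast, ← Int.ceil_add_intCast]
      apply Int.ceil_le.mpr
      push_cast
      have h2 : (⌊b * (N:ℝ)⌋ : ℝ) ≤ b * N := Int.floor_le _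
      have h3 : a * N + b * N ≤ N := by
        nlinarith [Nat.cast_nonneg (α := ℝ) N]
      linarith
    exact_mod_cast h1
  -- combinatorics
  have hcardPow : (C.powersetCard k).card = N := by
    rw [Finset.card_powersetCard, hC]
  have hfilter : (C.powersetCard k).filter (fun T => T ⊆ C') = (C ∩ C').powersetCard k := by
    ext T
    simp only [Finset.mem_filter, Finset.mem_powersetCard, Finset.subset_inter_iff]
    tauto
  have hcardInter : (C ∩ C').card = n - m := by
    have h1 : (C' ∩ C).card + (C' \ C).card = C'.card := Finset.card_inter_add_card_sdiff C' C
    rw [Finset.inter_comm]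
    omega
  have hcardq : ((C.powersetCard k).filter (fun T => T ⊆ C')).card = q := by
    rw [hfilter, Finset.card_powersetCard, hcardInter, hq]
  set P := (C.powersetCard k).filter (fun T => ¬ T ⊆ C') with hP
  have hcardP : P.card = N - q := by
    have h1 := Finset.card_filter_add_card_filter_not
      (s := C.powersetCard k) (p := fun T => T ⊆ C')
    rw [hcardq, hcardPow] at h1
    rw [hP]
    omega
  obtain ⟨Y, hYP, hYcard⟩ := Finset.exists_subset_card_eq (s := P) (n := A) (by omega)
  have hcardPY : (P \ Y).card = (N - q) - A := by
    rw [Finset.card_sdiff_of_subset hYP, hYcard, hcardP]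
  obtain ⟨Z, hZPY, hZcard⟩ := Finset.exists_subset_card_eq (s := P \ Y) (n := B - q) (by omega)
  have hZP : Z ⊆ P := hZPY.trans (Finset.sdiff_subset)
  have hZY : ∀ T ∈ Z, T ∉ Y := fun T hT => (Finset.mem_sdiff.mp (hZPY hT)).2
  have hYmem : ∀ T ∈ Y, T ∈ C.powersetCard k ∧ ¬ T ⊆ C' := by
    intro T hT
    have := hYP hT
    rw [hP, Finset.mem_filter] at this
    exact this
  have hZmem : ∀ T ∈ Z, T ∈ C.powersetCard k ∧ ¬ T ⊆ C' := by
    intro T hT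
    have := hZP hT
    rw [hP, Finset.mem_filter] at this
    exact this
  refine ⟨fun T => if T ∈ C'.powersetCard k then z
      else if T ∈ Y then y else if T ∈ Z then z else w, ?_, ?_, ?_, ?_, ?_⟩
  · -- labelCount k f C y = A
    have heq : (C.powersetCard k).filter
        (fun T => (if T ∈ C'.powersetCard k then z
          else if T ∈ Y then y else if T ∈ Z then z else w) = y) = Y := by
      ext T
      simp only [Finset.mem_filter]
      constructor
      · rintro ⟨hTC, hTy⟩
        by_cases h1 : T ∈ C'.powersetCard k
        · simp [h1] at hTy; exact absurd hTy.symm hyz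
        · rw [if_neg h1] at hTy
          by_cases h2 : T ∈ Y
          · exact h2
          · rw [if_neg h2] at hTy
            by_cases h3 : T ∈ Z
            · rw [if_pos h3] at hTy; exact absurd hTy.symm hyz
            · rw [if_neg h3] at hTy; exact absurd hTy hwy
      · intro hTY
        obtain ⟨hTC, hTC'⟩ := hYmem T hTY
        have h1 : T ∉ C'.powersetCard k := by
          rw [Finset.mem_powersetCard]; tauto
        refine ⟨hTC, ?_⟩
        rw [if_neg h1, if_pos hTY]
    rw [labelCount, heq, hYcard, hAcast]
  · -- labelCount k f C z = B
    have heq : (C.powersetCard k).filter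
        (fun T => (if T ∈ C'.powersetCard k then z
          else if T ∈ Y then y else if T ∈ Z then z else w) = z) =
        ((C.powersetCard k).filter (fun T => T ⊆ C')) ∪ Z := by
      ext T
      simp only [Finset.mem_filter, Finset.mem_union]
      constructor
      · rintro ⟨hTC, hTz⟩
        by_cases h1 : T ∈ C'.powersetCard k
        · left
          refine ⟨hTC, ?_⟩
          rw [Finset.mem_powersetCard] at h1
          exact h1.1
        · rw [if_neg h1] at hTz
          by_cases h2 : T ∈ Y
          · rw [if_pos h2] at hTz; exact absurd hTz hyz
          · rw [if_neg h2] at hTz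
            by_cases h3 : T ∈ Z
            · right; exact h3
            · rw [if_neg h3] at hTz; exact absurd hTz hwz
      · rintro (⟨hTC, hTsub⟩ | hTZ)
        · have h1 : T ∈ C'.powersetCard k := by
            rw [Finset.mem_powersetCard] at hTC ⊢
            exact ⟨hTsub, hTC.2⟩
          exact ⟨hTC, by rw [if_pos h1]⟩
        · obtain ⟨hTC, hTC'⟩ := hZmem T hTZ
          have h1 : T ∉ C'.powersetCard k := by
            rw [Finset.mem_powersetCard]; tauto
          refine ⟨hTC, ?_⟩
          rw [if_neg h1, if_neg (hZY T hTZ), if_pos hTZ]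
    have hdisj : Disjoint ((C.powersetCard k).filter (fun T => T ⊆ C')) Z := by
      rw [Finset.disjoint_left]
      intro T hT hTZ
      rw [Finset.mem_filter] at hT
      exact (hZmem T hTZ).2 hT.2
    rw [labelCount, heq, Finset.card_union_of_disjoint hdisj, hcardq, hZcard]
    have : q + (B - q) = B := by omega
    rw [this, hBcast]
  · -- ∀ T ∈ C'.powersetCard k, f T = z
    intro T hT
    dsimp only
    rw [if_pos hT]
  · -- labelCount k f C' z = N
    have heq : (C'.powersetCard k).filter
        (fun T => (if T ∈ C'.powersetCard k then z
          else if T ∈ Y then y else if T ∈ Z then z else w) = z) =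
        C'.powersetCard k := by
      apply Finset.filter_true_of_mem
      intro T hT
      rw [if_pos hT]
    rw [labelCount, heq, Finset.card_powersetCard, hC']
  · -- labelCount k f C' y = 0
    rw [labelCount, Finset.card_eq_zero]
    apply Finset.filter_false_of_mem
    intro T hT
    rw [if_pos hT]
    exact fun h => hyz h.symm
end

section
/- (Tightness, Case 4.) Let C and C' be finite sets of clients with |C| = |C'| = n, put m := |C' \ C| and q := C(n−m, k), and assume 1 ≤ m, 1 ≤ k, and k < n − m. Let y, z be distinct labels such that there exists a third label distinct from both, and let a, b be real numbers with a·C(n,k) > C(n,k) − q, 0 ≤ b ≤ 1 − a, and suppose ⌈a·C(n,k)⌉/C(n,k) − ⌊b·C(n,k)⌋/C(n,k) ≤ 2 − 2·q/C(n,k). Then there exists a function f : Finset Client → Label such that N_y(C, f) = ⌈a·C(n,k)⌉, N_z(C, f) = ⌊b·C(n,k)⌋, N_y(C', f) = ⌈a·C(n,k)⌉ + q − C(n,k), N_z(C', f) = ⌊b·C(n,k)⌋ + C(n,k) − q, and N_y(C', f) ≤ N_z(C', f). -/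
open Finset

theorem flcertP_tightness_case4
    {Client Label : Type} [DecidableEq Client] [DecidableEq Label]
    (n k : ℕ)
    (C C' : Finset Client) (hC : C.card = n) (hC' : C'.card = n)
    (m : ℕ) (hm : m = (C' \ C).card)
    (q : ℕ) (hq : q = Nat.choose (n - m) k)
    (hm1 : 1 ≤ m) (hk1 : 1 ≤ k) (hknm : k < n - m)
    (y z : Label) (hyz : y ≠ z) (hthird : ∃ w : Label, w ≠ y ∧ w ≠ z)
    (a b : ℝ)
    (ha : a * (Nat.choose n k : ℝ) > (Nat.choose n k : ℝ) - (q : ℝ))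
    (hb0 : 0 ≤ b) (hb : b ≤ 1 - a)
    (hfail : (⌈a * (Nat.choose n k : ℝ)⌉ : ℝ) / (Nat.choose n k : ℝ)
           - (⌊b * (Nat.choose n k : ℝ)⌋ : ℝ) / (Nat.choose n k : ℝ)
           ≤ 2 - 2 * (q : ℝ) / (Nat.choose n k : ℝ)) :
    ∃ f : Finset Client → Label,
      (labelCount k f C y : ℤ) = ⌈a * (Nat.choose n k : ℝ)⌉ ∧
      (labelCount k f C z : ℤ) = ⌊b * (Nat.choose n k : ℝ)⌋ ∧
      (labelCount k f C' y : ℤ) = ⌈a * (Nat.choose n k : ℝ)⌉ + (q : ℤ) - (Nat.choose n k : ℤ) ∧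
      (labelCount k f C' z : ℤ) = ⌊b * (Nat.choose n k : ℝ)⌋ + (Nat.choose n k : ℤ) - (q : ℤ) ∧
      labelCount k f C' y ≤ labelCount k f C' z := by
  classical
  obtain ⟨w, hwy, hwz⟩ := hthird
  set N := Nat.choose n k with hN
  set Az := ⌈a * (N : ℝ)⌉ with hAz
  set Bz := ⌊b * (N : ℝ)⌋ with hBz
  have hkn : k ≤ n := le_trans (le_of_lt hknm) (Nat.sub_le n m)
  have hNpos : 0 < N := Nat.choose_pos hkn
  have hqN : q ≤ N := by rw [hq, hN]; exact Nat.choose_le_choose k (Nat.sub_le n m)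
  have hNR : (0 : ℝ) < (N : ℝ) := by exact_mod_cast hNpos
  have hB0 : 0 ≤ Bz := Int.floor_nonneg.mpr (by positivity)
  have hA : (N : ℤ) - q < Az := by
    rw [hAz]
    refine Int.lt_ceil.mpr ?_
    push_cast
    linarith
  have hABle : Az + Bz ≤ (N : ℤ) := by
    have h1 : (Az : ℝ) < a * N + 1 := Int.ceil_lt_add_one _
    have h2 : (Bz : ℝ) ≤ b * N := Int.floor_le _
    have h3 : (a + b) * N ≤ N := by nlinarith
    have h4 : (Az : ℝ) + (Bz : ℝ) < (N : ℝ) + 1 := by nlinarith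
    have h5 : Az + Bz < (N : ℤ) + 1 := by exact_mod_cast h4
    omega
  -- key inequality from hfail
  have hkey : Az - Bz ≤ 2 * (N : ℤ) - 2 * q := by
    have h := mul_le_mul_of_nonneg_right hfail (le_of_lt hNR)
    have e1 : ((Az : ℝ) / N - (Bz : ℝ) / N) * N = (Az : ℝ) - Bz := by
      field_simp
    have e2 : (2 - 2 * (q : ℝ) / N) * N = 2 * N - 2 * q := by
      field_simp
    rw [e1, e2] at h
    have : (Az : ℝ) - Bz ≤ 2 * (N : ℝ) - 2 * q := h
    exact_mod_cast this
  set sY : ℕ := (Az + q - N).toNat with hsY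
  set sZ : ℕ := Bz.toNat with hsZ
  have hsYz : (sY : ℤ) = Az + q - N := by rw [hsY]; omega
  have hsZz : (sZ : ℤ) = Bz := by rw [hsZ]; omega
  have hsYZ : sY + sZ ≤ q := by
    have : (sY : ℤ) + sZ ≤ q := by rw [hsYz, hsZz]; omega
    exact_mod_cast this
  -- shared subsets
  set Shared := powersetCard k (C ∩ C') with hShared
  have hinter : (C ∩ C').card = n - m := by
    have h1 := Finset.card_sdiff_add_card_inter C' C
    rw [hC'] at h1
    rw [Finset.inter_comm]
    omega
  have hSharedCard : Shared.card = q := by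
    rw [hShared, Finset.card_powersetCard, hinter, hq]
  obtain ⟨W, hWsub, hWcard⟩ := Finset.exists_subset_card_eq
    (show sY + sZ ≤ Shared.card by rw [hSharedCard]; exact hsYZ)
  obtain ⟨Y, hYsub, hYcard⟩ := Finset.exists_subset_card_eq
    (show sY ≤ W.card by rw [hWcard]; omega)
  set Z := W \ Y with hZ
  have hZcard : Z.card = sZ := by
    rw [hZ, Finset.card_sdiff_of_subset hYsub, hWcard, hYcard]; omega
  have hYmem : ∀ T ∈ Y, T ∈ Shared := fun T hT => hWsub (hYsub hT)
  have hZmem : ∀ T ∈ Z, T ∈ Shared := fun T hT => hWsub (Finset.sdiff_subset hT)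
  have hYZdisj : Disjoint Y Z := Finset.disjoint_sdiff
  set f : Finset Client → Label := fun T =>
    if T ∈ Y then y else if T ∈ Z then z
    else if T.card = k ∧ T ⊆ C ∧ ¬ T ⊆ C' then y
    else if T.card = k ∧ T ⊆ C' ∧ ¬ T ⊆ C then z else w with hf
  have hSharedC : Shared ⊆ powersetCard k C :=
    Finset.powersetCard_mono Finset.inter_subset_left
  have hSharedC' : Shared ⊆ powersetCard k C' :=
    Finset.powersetCard_mono Finset.inter_subset_right
  have hPC : (powersetCard k C).card = N := by rw [Finset.card_powersetCard, hC]
  have hPC' : (powersetCard k C').card = N := by rw [Finset.card_powersetCard, hC']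
  -- counting in C
  have cCy : labelCount k f C y = sY + (N - q) := by
    unfold labelCount
    have hset : (powersetCard k C).filter (fun T => f T = y)
        = Y ∪ (powersetCard k C \ Shared) := by
      ext T
      simp only [Finset.mem_filter, Finset.mem_union, Finset.mem_sdiff,
        Finset.mem_powersetCard]
      constructor
      · rintro ⟨⟨hTC, hTk⟩, hfT⟩
        by_cases hTY : T ∈ Y
        · exact Or.inl hTY
        right
        refine ⟨⟨hTC, hTk⟩, ?_⟩
        by_cases hTZ : T ∈ Z
        · exfalso; simp [hf, hTY, hTZ] at hfT; exact hyz hfT.symm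
        intro hTS
        have hTC' : T ⊆ C' :=
          (Finset.mem_powersetCard.mp hTS).1.trans Finset.inter_subset_right
        simp [hf, hTY, hTZ, hTC, hTC', hTk] at hfT
        exact hwy hfT
      · rintro (hTY | ⟨⟨hTC, hTk⟩, hTS⟩)
        · obtain ⟨hsub, hcard⟩ := Finset.mem_powersetCard.mp (hYmem T hTY)
          exact ⟨⟨hsub.trans Finset.inter_subset_left, hcard⟩, by simp [hf, hTY]⟩
        · have hTY : T ∉ Y := fun h => hTS (hYmem T h)
          have hTZ : T ∉ Z := fun h => hTS (hZmem T h)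
          have hTC' : ¬ T ⊆ C' := fun h =>
            hTS (Finset.mem_powersetCard.mpr ⟨Finset.subset_inter hTC h, hTk⟩)
          exact ⟨⟨hTC, hTk⟩, by simp [hf, hTY, hTZ, hTC, hTC', hTk]⟩
    rw [hset, Finset.card_union_of_disjoint, hYcard,
      Finset.card_sdiff_of_subset hSharedC, hPC, hSharedCard]
    exact Finset.disjoint_left.mpr fun T hT hT2 => (Finset.mem_sdiff.mp hT2).2 (hYmem T hT)
  have cCz : labelCount k f C z = sZ := by
    unfold labelCount
    have hset : (powersetCard k C).filter (fun T => f T = z) = Z := by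
      ext T
      simp only [Finset.mem_filter, Finset.mem_powersetCard]
      constructor
      · rintro ⟨⟨hTC, hTk⟩, hfT⟩
        by_cases hTZ : T ∈ Z
        · exact hTZ
        exfalso
        by_cases hTY : T ∈ Y
        · simp [hf, hTY] at hfT; exact hyz hfT
        by_cases hTC' : T ⊆ C'
        · simp [hf, hTY, hTZ, hTC, hTC', hTk] at hfT; exact hwz hfT
        · simp [hf, hTY, hTZ, hTC, hTC', hTk] at hfT; exact hyz hfT
      · intro hTZ
        have hTY : T ∉ Y := Finset.disjoint_right.mp hYZdisj hTZ
        obtain ⟨hsub, hcard⟩ := Finset.mem_powersetCard.mp (hZmem T hTZ)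
        exact ⟨⟨hsub.trans Finset.inter_subset_left, hcard⟩, by simp [hf, hTY, hTZ]⟩
    rw [hset, hZcard]
  have cC'y : labelCount k f C' y = sY := by
    unfold labelCount
    have hset : (powersetCard k C').filter (fun T => f T = y) = Y := by
      ext T
      simp only [Finset.mem_filter, Finset.mem_powersetCard]
      constructor
      · rintro ⟨⟨hTC', hTk⟩, hfT⟩
        by_cases hTY : T ∈ Y
        · exact hTY
        exfalso
        by_cases hTZ : T ∈ Z
        · simp [hf, hTY, hTZ] at hfT; exact hyz hfT.symm
        by_cases hTC : T ⊆ C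
        · simp [hf, hTY, hTZ, hTC, hTC', hTk] at hfT; exact hwy hfT
        · simp [hf, hTY, hTZ, hTC, hTC', hTk] at hfT; exact hyz hfT.symm
      · intro hTY
        obtain ⟨hsub, hcard⟩ := Finset.mem_powersetCard.mp (hYmem T hTY)
        exact ⟨⟨hsub.trans Finset.inter_subset_right, hcard⟩, by simp [hf, hTY]⟩
    rw [hset, hYcard]
  have cC'z : labelCount k f C' z = sZ + (N - q) := by
    unfold labelCount
    have hset : (powersetCard k C').filter (fun T => f T = z)
        = Z ∪ (powersetCard k C' \ Shared) := by
      ext T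
      simp only [Finset.mem_filter, Finset.mem_union, Finset.mem_sdiff,
        Finset.mem_powersetCard]
      constructor
      · rintro ⟨⟨hTC', hTk⟩, hfT⟩
        by_cases hTZ : T ∈ Z
        · exact Or.inl hTZ
        right
        refine ⟨⟨hTC', hTk⟩, ?_⟩
        by_cases hTY : T ∈ Y
        · exfalso; simp [hf, hTY] at hfT; exact hyz hfT
        intro hTS
        have hTC : T ⊆ C :=
          (Finset.mem_powersetCard.mp hTS).1.trans Finset.inter_subset_left
        simp [hf, hTY, hTZ, hTC, hTC', hTk] at hfT
        exact hwz hfT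
      · rintro (hTZ | ⟨⟨hTC', hTk⟩, hTS⟩)
        · have hTY : T ∉ Y := Finset.disjoint_right.mp hYZdisj hTZ
          obtain ⟨hsub, hcard⟩ := Finset.mem_powersetCard.mp (hZmem T hTZ)
          exact ⟨⟨hsub.trans Finset.inter_subset_right, hcard⟩, by simp [hf, hTY, hTZ]⟩
        · have hTY : T ∉ Y := fun h => hTS (hYmem T h)
          have hTZ : T ∉ Z := fun h => hTS (hZmem T h)
          have hTC : ¬ T ⊆ C := fun h =>
            hTS (Finset.mem_powersetCard.mpr ⟨Finset.subset_inter h hTC', hTk⟩)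
          exact ⟨⟨hTC', hTk⟩, by simp [hf, hTY, hTZ, hTC, hTC', hTk]⟩
    rw [hset, Finset.card_union_of_disjoint, hZcard,
      Finset.card_sdiff_of_subset hSharedC', hPC', hSharedCard]
    exact Finset.disjoint_left.mpr fun T hT hT2 => (Finset.mem_sdiff.mp hT2).2 (hZmem T hT)
  refine ⟨f, ?_, ?_, ?_, ?_, ?_⟩
  · rw [cCy]; push_cast [Nat.cast_sub hqN]; omega
  · rw [cCz]; exact hsZz
  · rw [cC'y]; rw [hsYz]
  · rw [cC'z]; push_cast [Nat.cast_sub hqN]; omega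
  · rw [cC'y, cC'z]
    have : (sY : ℤ) ≤ (sZ : ℤ) + ((N : ℤ) - q) := by rw [hsYz, hsZz]; omega
    omega
end

section
/- (Certified security level of FLCert-D.) Let L ≥ 2 and N ≥ 1 be natural numbers, and let h : Fin N → Fin L assign to each of N groups the label its global model predicts for a fixed test input. Let y := F(h) be the ensemble prediction, let z be the least label among the labels j ≠ y that maximize n_j(h) over all j ≠ y, and let m be a natural number satisfying 2·m + (1 if z < y else 0) ≤ n_y(h) − n_z(h). Then for every h' : Fin N → Fin L with |{g : h' g ≠ h g}| ≤ m (i.e., at most m groups change their predicted label), one has F(h') = y. -/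
open Finset

/-- Label frequency: the number of groups `g` whose predicted label is `j`. -/
def freq {N L : ℕ} (h : Fin N → Fin L) (j : Fin L) : ℕ :=
  (Finset.univ.filter (fun g => h g = j)).card

/-- The ensemble prediction: the least label among those maximizing the label frequency
(ties are broken by selecting the smallest label index). -/
noncomputable def ensemble {N L : ℕ} (hL : 0 < L) (h : Fin N → Fin L) : Fin L :=
  (Finset.univ.filter (fun j => ∀ i : Fin L, freq h i ≤ freq h j)).min' (by
    obtain ⟨j, _, hj⟩ := Finset.exists_max_image Finset.univ (freq h)
      (Finset.univ_nonempty_iff.mpr ⟨⟨0, hL⟩⟩)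
    exact ⟨j, Finset.mem_filter.mpr ⟨Finset.mem_univ _, fun i => hj i (Finset.mem_univ i)⟩⟩)

theorem flcertD_certified_security
    (L N : ℕ) (hL : 2 ≤ L) (hN : 1 ≤ N)
    (h : Fin N → Fin L)
    (y : Fin L) (hy : y = ensemble (by omega) h)
    (z : Fin L) (hzy : z ≠ y)
    (hzmax : ∀ i : Fin L, i ≠ y → freq h i ≤ freq h z)
    (hzleast : ∀ j : Fin L, j ≠ y → (∀ i : Fin L, i ≠ y → freq h i ≤ freq h j) → z ≤ j)
    (m : ℕ)
    (hm : 2 * (m : ℤ) + (if z < y then 1 else 0)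
            ≤ (freq h y : ℤ) - (freq h z : ℤ)) :
    ∀ h' : Fin N → Fin L,
      (Finset.univ.filter (fun g => h' g ≠ h g)).card ≤ m →
      ensemble (by omega) h' = y := by
  intro h' hcard
  set D := (Finset.univ.filter (fun g => h' g ≠ h g)).card with hD
  -- basic perturbation bounds
  have key : ∀ (f f' : Fin N → Fin L) (j : Fin L),
      freq f' j ≤ freq f j + (Finset.univ.filter (fun g => f' g ≠ f g)).card := by
    intro f f' j
    unfold freq
    have hsub : (Finset.univ.filter (fun g => f' g = j)) ⊆
        (Finset.univ.filter (fun g => f g = j)) ∪ (Finset.univ.filter (fun g => f' g ≠ f g)) := by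
      intro g hg
      simp only [mem_filter, mem_univ, true_and] at hg
      by_cases hfg : f g = j
      · exact Finset.mem_union_left _ (by simp [hfg])
      · refine Finset.mem_union_right _ ?_
        simp only [mem_filter, mem_univ, true_and]
        rw [hg]
        exact fun hc => hfg hc.symm
    exact le_trans (Finset.card_le_card hsub) (Finset.card_union_le _ _)
  have hsymm : (Finset.univ.filter (fun g => h g ≠ h' g)).card = D := by
    rw [hD]; congr 1; ext g; simp [ne_comm]
  have hup : ∀ j, (freq h' j : ℤ) ≤ freq h j + D := by
    intro j; exact_mod_cast key h h' j
  have hdown : ∀ j, (freq h j : ℤ) ≤ freq h' j + D := by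
    intro j
    have := key h' h j
    rw [hsymm] at this
    exact_mod_cast this
  have hDm : (D : ℤ) ≤ m := by exact_mod_cast hcard
  have hind : (0 : ℤ) ≤ (if z < y then 1 else 0) := by positivity
  -- y is a maximizer for h'
  have hymax' : ∀ i : Fin L, freq h' i ≤ freq h' y := by
    intro i
    by_cases hi : i = y
    · subst hi; exact le_refl _
    · have h1 : (freq h' i : ℤ) ≤ freq h z + D := by
        have := hzmax i hi
        have := hup i
        push_cast at *
        omega
      have h2 : (freq h y : ℤ) ≤ freq h' y + D := hdown y
      have : (freq h' i : ℤ) ≤ freq h' y := by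
        rcases le_or_gt z y with hzly | hzgy
        · have hlt : z < y := lt_of_le_of_ne hzly hzy
          rw [if_pos hlt] at hm
          omega
        · rw [if_neg (not_lt.mpr (le_of_lt hzgy))] at hm
          omega
      exact_mod_cast this
  -- any maximizer j of h' satisfies y ≤ j
  have hyle : ∀ j : Fin L, (∀ i : Fin L, freq h' i ≤ freq h' j) → y ≤ j := by
    intro j hj
    by_cases hjy : j = y
    · exact le_of_eq hjy.symm
    · have hjy' : freq h' y ≤ freq h' j := hj y
      have h1 : (freq h' j : ℤ) ≤ freq h j + D := hup j
      have h2 : (freq h y : ℤ) ≤ freq h' y + D := hdown y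
      have h3 : (freq h j : ℤ) ≤ freq h z := by exact_mod_cast hzmax j hjy
      rcases lt_or_gt_of_ne hzy with hlt | hgt
      · -- z < y : contradiction, strict max
        exfalso
        rw [if_pos hlt] at hm
        have : (freq h' y : ℤ) ≤ freq h' j := by exact_mod_cast hjy'
        omega
      · -- y < z : j must be a maximizer among labels ≠ y, so z ≤ j
        rw [if_neg (not_lt.mpr (le_of_lt hgt))] at hm
        have hjz : (freq h z : ℤ) ≤ freq h j := by
          have : (freq h' y : ℤ) ≤ freq h' j := by exact_mod_cast hjy'
          omega
        have hjmax : ∀ i : Fin L, i ≠ y → freq h i ≤ freq h j := by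
          intro i hi
          have := hzmax i hi
          have : (freq h i : ℤ) ≤ freq h j := by push_cast at *; omega
          exact_mod_cast this
        exact le_trans (le_of_lt hgt) (hzleast j hjy hjmax)
  -- conclude
  unfold ensemble
  apply le_antisymm
  · apply Finset.min'_le
    exact Finset.mem_filter.mpr ⟨Finset.mem_univ _, hymax'⟩
  · apply Finset.le_min'
    intro j hjmem
    exact hyle j (Finset.mem_filter.mp hjmem).2
end
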